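/- arXiv:2502.05618 — 3 statements merged into one kernel-verified Lean document; each statement's English description precedes it below -/
import Mathlib

section
/- Let λ, μ ∈ P̃ℓk and z ∈ [b_λ − 1], and let i ∈ [ℓ − z − 1] be such that z + i ∈ [b_λ]. Suppose (a) λ_z = λ_{z+1} = ⋯ = λ_{z+i} ≥ λ_{z+i+1}; (b) μ_{z+i−1} + 1 = μ_{z+i} ≥ μ_{z+i+1}; (c) μ_{z+i−1} + 1 = λ_{z+i−1}. Then down_{Δ^k(λ)}(z) and down_{Δ^k(μ)}(z+i) are both defined and down_{Δ^k(λ)}(z) + i = down_{Δ^k(μ)}(z+i). -/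
/-!
Common framework: root ideals, Katalan functions, (generalized) K-k-Schur functions,
lowering operators, bounce paths, the sets `Ω`, and (k+1)-cores.
Vectors `γ ∈ ℤ^ℓ` are modelled as functions `ℕ → ℤ`, with the relevant indices `1,…,ℓ`.
Symmetric-function identities are stated in `MvPolynomial (Fin N) ℚ` for every `N`.
-/

noncomputable section KkSchur

/-- Complete homogeneous symmetric polynomial of degree `d` in `N` variables over `ℚ`. -/
def hsym (N d : ℕ) : MvPolynomial (Fin N) ℚ :=
  ∑ m : Sym (Fin N) d, (m.1.map MvPolynomial.X).prod

/-- The inhomogeneous version `k_m^{(r)} = Σ_{i=0}^m C(r+i-1,i) h_{m-i}` (zero for `m < 0`). -/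
def kpoly (N : ℕ) (r : ℕ) (m : ℤ) : MvPolynomial (Fin N) ℚ :=
  if m < 0 then 0
  else ∑ i ∈ Finset.range (m.toNat + 1), ((r + i - 1).choose i : ℚ) • hsym N (m.toNat - i)

/-- `k_γ = k_{γ₁}^{(0)} ⋯ k_{γ_ℓ}^{(ℓ-1)}`. -/
def kgamma (N ℓ : ℕ) (γ : ℕ → ℤ) : MvPolynomial (Fin N) ℚ :=
  ∏ i ∈ Finset.Icc 1 ℓ, kpoly N (i - 1) (γ i)

/-- `Δ⁺_ℓ = {(i,j) : 1 ≤ i < j ≤ ℓ}`. -/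
def DeltaPlus (ℓ : ℕ) : Finset (ℕ × ℕ) :=
  (Finset.Icc 1 ℓ ×ˢ Finset.Icc 1 ℓ).filter fun p => p.1 < p.2

/-- Root ideal: an upper order ideal of `Δ⁺_ℓ` for `(a,b) ≤ (c,d) ↔ a ≥ c ∧ b ≤ d`. -/
def IsRootIdeal (ℓ : ℕ) (Ψ : Finset (ℕ × ℕ)) : Prop :=
  Ψ ⊆ DeltaPlus ℓ ∧ ∀ p ∈ Ψ, ∀ q ∈ DeltaPlus ℓ, q.1 ≤ p.1 → p.2 ≤ q.2 → q ∈ Ψ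

/-- Indicator (as an integer vector) of the interval `[a,b]`. -/
def epsI (a b : ℕ) : ℕ → ℤ := fun t => if a ≤ t ∧ t ≤ b then 1 else 0

/-- Effect of the lowering operators `∏_{z ∈ T} L_z` on the index vector `γ`. -/
def shiftL (T : Multiset ℕ) (γ : ℕ → ℤ) : ℕ → ℤ := fun t => γ t - T.count t

/-- Effect of the raising operators `∏_{(i,j) ∈ A} R_{ij}` on the index vector `γ`. -/
def shiftR (A : Finset (ℕ × ℕ)) (γ : ℕ → ℤ) : ℕ → ℤ := fun t =>
  γ t + ((A.filter fun p => p.1 = t).card : ℤ) - ((A.filter fun p => p.2 = t).card : ℤ)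

/-- The Katalan function `K(Ψ; M; γ) = ∏_{z∈M}(1-L_z) ∏_{(i,j)∈Δ⁺∖Ψ}(1-R_{ij}) k_γ`,
expanded as a signed sum over sub-multisets of `M` and subsets of `Δ⁺_ℓ ∖ Ψ`. -/
def Katalan (N ℓ : ℕ) (Ψ : Finset (ℕ × ℕ)) (M : Multiset ℕ) (γ : ℕ → ℤ) :
    MvPolynomial (Fin N) ℚ :=
  (M.powerset.map fun T =>
    ((-1 : ℚ) ^ Multiset.card T) •
      ∑ A ∈ (DeltaPlus ℓ \ Ψ).powerset,
        ((-1 : ℚ) ^ A.card) • kgamma N ℓ (shiftR A (shiftL T γ))).sum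

/-- The root ideal `Δ^k(μ) = {(i,j) ∈ Δ⁺_ℓ : k - μ_i + i < j}`. -/
def DeltaK (k ℓ : ℕ) (μ : ℕ → ℤ) : Finset (ℕ × ℕ) :=
  (DeltaPlus ℓ).filter fun p => (k : ℤ) - μ p.1 + p.1 < p.2

/-- `L(R)`: the multiset of second components of `R`. -/
def Lmul (R : Finset (ℕ × ℕ)) : Multiset ℕ := R.val.map Prod.snd

/-- The bottom `b_μ` of the root ideal `Δ^k(μ)` (0 if the root ideal is empty). -/
def bottomB (k ℓ : ℕ) (μ : ℕ → ℤ) : ℕ := (DeltaK k ℓ μ).sup Prod.fst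

/-- `(x,j)` is a removable root of `Ψ`. -/
def IsRemovableAt (ℓ : ℕ) (Ψ : Finset (ℕ × ℕ)) (x j : ℕ) : Prop :=
  (x, j) ∈ Ψ ∧ IsRootIdeal ℓ (Ψ.erase (x, j))

open scoped Classical in
/-- `down_Ψ(x)`: the column of the removable root in row `x` (0 if undefined). -/
def downF (ℓ : ℕ) (Ψ : Finset (ℕ × ℕ)) (x : ℕ) : ℕ :=
  ((Finset.Icc 1 ℓ).filter fun j => IsRemovableAt ℓ Ψ x j).sup id

open scoped Classical in
/-- `up_Ψ(x)`: the row of the removable root in column `x` (0 if undefined). -/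
def upF (ℓ : ℕ) (Ψ : Finset (ℕ × ℕ)) (x : ℕ) : ℕ :=
  ((Finset.Icc 1 ℓ).filter fun j => IsRemovableAt ℓ Ψ j x).sup id

/-- `top_Ψ(x)`: the minimum vertex of the bounce path of `Ψ` containing `x`. -/
def topF (ℓ : ℕ) (Ψ : Finset (ℕ × ℕ)) (x : ℕ) : ℕ :=
  if h : 0 < upF ℓ Ψ x ∧ upF ℓ Ψ x < x then topF ℓ Ψ (upF ℓ Ψ x) else x
termination_by x
decreasing_by exact h.2

/-- Membership in `P̃ℓk`. -/
def memPt (k ℓ : ℕ) (μ : ℕ → ℤ) : Prop :=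
  (∀ i ∈ Finset.Icc 1 ℓ, μ i ≤ k) ∧ ∀ i ∈ Finset.Icc 1 (ℓ - 1), μ (i + 1) ≤ μ i + 1

/-- Membership in `Pℓk` (`k`-bounded partitions of length `ℓ`). -/
def memPk (k ℓ : ℕ) (μ : ℕ → ℤ) : Prop :=
  (∀ i ∈ Finset.Icc 1 ℓ, 0 ≤ μ i ∧ μ i ≤ k) ∧ ∀ i ∈ Finset.Icc 1 (ℓ - 1), μ (i + 1) ≤ μ i

/-- The (generalized) K-k-Schur function `g_μ^{(k)} = K(Δ^k(μ); L(Δ^{k+1}(μ)); μ)`. -/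
def gk (N k ℓ : ℕ) (μ : ℕ → ℤ) : MvPolynomial (Fin N) ℚ :=
  Katalan N ℓ (DeltaK k ℓ μ) (Lmul (DeltaK (k + 1) ℓ μ)) μ

/-- `L_w g_μ^{(k)} = K(Δ^k(μ); L(Δ^{k+1}(μ)); μ - ε_w)`, with `L_w = 0` for `w > ℓ`. -/
def Lg (N k ℓ : ℕ) (w : ℕ) (μ : ℕ → ℤ) : MvPolynomial (Fin N) ℚ :=
  if w ≤ ℓ then
    Katalan N ℓ (DeltaK k ℓ μ) (Lmul (DeltaK (k + 1) ℓ μ))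
      (fun t => μ t - if t = w then 1 else 0)
  else 0

open scoped Classical in
/-- `(∏_{w ∈ S} L_w) g_μ^{(k)}`, with the convention `L_w = 0` for `w > ℓ`. -/
def LgM (N k ℓ : ℕ) (S : Multiset ℕ) (μ : ℕ → ℤ) : MvPolynomial (Fin N) ℚ :=
  if ∀ w ∈ S, w ≤ ℓ then
    Katalan N ℓ (DeltaK k ℓ μ) (Lmul (DeltaK (k + 1) ℓ μ)) (fun t => μ t - S.count t)
  else 0

/-- The chain conditions (10) defining `h_{μ,z}` (Definition 3.4). -/
def hcond (k ℓ : ℕ) (μ : ℕ → ℤ) (z h : ℕ) : Prop :=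
  (∀ t, 1 ≤ t → t ≤ h → μ (z + t) = μ z + 1) ∧
  (∀ c, 1 ≤ c → (upF ℓ (DeltaK k ℓ μ))^[c] z ≠ 0 →
    ∀ t ≤ h, μ ((upF ℓ (DeltaK k ℓ μ))^[c] (z + t)) = μ ((upF ℓ (DeltaK k ℓ μ))^[c] z)) ∧
  (∀ t, 1 ≤ t → t ≤ h →
    μ (upF ℓ (DeltaK k ℓ μ) (topF ℓ (DeltaK k ℓ μ) z + t)) =
      μ (upF ℓ (DeltaK k ℓ μ) (topF ℓ (DeltaK k ℓ μ) z + 1)))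

open scoped Classical in
/-- `h_{μ,z}` of Definition 3.4. -/
def hval (k ℓ : ℕ) (μ : ℕ → ℤ) (z : ℕ) : ℕ :=
  if z = ℓ ∨ μ (z + 1) ≤ μ z then 0
  else ((Finset.Icc 1 (ℓ - z)).filter fun h => hcond k ℓ μ z h).sup id

/-- `cover_{z,i}(μ) = μ + ε_{[up(y+1), up(y+i)]} - ε_{[z+1,z+i]}` where `y = top_{Δ^k(μ)}(z)`. -/
def coverzi (k ℓ : ℕ) (μ : ℕ → ℤ) (z i : ℕ) : ℕ → ℤ :=
  if i = 0 then μ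
  else fun t =>
    μ t +
      epsI (upF ℓ (DeltaK k ℓ μ) (topF ℓ (DeltaK k ℓ μ) z + 1))
        (upF ℓ (DeltaK k ℓ μ) (topF ℓ (DeltaK k ℓ μ) z + i)) t -
      epsI (z + 1) (z + i) t

/-- `cover_z(μ) = cover_{z,h_{μ,z}}(μ)`. -/
def coverz (k ℓ : ℕ) (μ : ℕ → ℤ) (z : ℕ) : ℕ → ℤ := coverzi k ℓ μ z (hval k ℓ μ z)

open scoped Classical in
/-- `h′`: the largest `h ∈ [0, ℓ-z]` with `μ_z + 1 = μ_{z+1} = ⋯ = μ_{z+h}`. -/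
def hprime (ℓ : ℕ) (μ : ℕ → ℤ) (z : ℕ) : ℕ :=
  ((Finset.Icc 0 (ℓ - z)).filter fun h => ∀ t, 1 ≤ t → t ≤ h → μ (z + t) = μ z + 1).sup id

/-- `μ_j = μ + σ - ε_{[z+1, z_j]}`, the partial vector in the recursive choice of quadruples. -/
def stepMu (μ σ : ℕ → ℤ) (z zj : ℕ) : ℕ → ℤ := fun t => μ t + σ t - epsI (z + 1) zj t

/-- Valid sequences of quadruples `(z_j, Ψ_j, y_j, i_j)` in the definition of `Ω_{λ,z,d}`:
`ValidSeq k ℓ μ z d σ lo` means `σ` is the accumulated sum of the interval vectors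
`ε_{[up_{Ψ_j}(y_j+1), up_{Ψ_j}(y_j+i_j)]}` and `lo` is the lower bound `z_j + i_j + 1`
for the next choice. -/
inductive ValidSeq (k ℓ : ℕ) (μ : ℕ → ℤ) (z d : ℕ) : (ℕ → ℤ) → ℕ → Prop where
  | nil : ValidSeq k ℓ μ z d (fun _ => 0) z
  | cons (σ : ℕ → ℤ) (lo zj ij : ℕ) :
      ValidSeq k ℓ μ z d σ lo →
      lo ≤ zj → zj + 1 ≤ z + d →
      memPt k ℓ (stepMu μ σ z zj) →
      topF ℓ (DeltaK k ℓ (stepMu μ σ z zj)) (zj + 1) <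
        topF ℓ (DeltaK k ℓ (stepMu μ σ z zj)) zj →
      1 ≤ ij → ij ≤ hval k ℓ (stepMu μ σ z zj) zj → ij ≤ d - zj →
      upF ℓ (DeltaK k ℓ (stepMu μ σ z zj))
          (topF ℓ (DeltaK k ℓ (stepMu μ σ z zj)) zj + ij) < topF ℓ (DeltaK k ℓ μ) z →
      ValidSeq k ℓ μ z d
        (fun t => σ t +
          epsI (upF ℓ (DeltaK k ℓ (stepMu μ σ z zj))
                  (topF ℓ (DeltaK k ℓ (stepMu μ σ z zj)) zj + 1))
               (upF ℓ (DeltaK k ℓ (stepMu μ σ z zj))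
                  (topF ℓ (DeltaK k ℓ (stepMu μ σ z zj)) zj + ij)) t)
        (zj + ij + 1)

/-- Membership in `Ω_{λ,z,d}`. -/
def OmegaMem (k ℓ : ℕ) (lam : ℕ → ℤ) (z d : ℕ) (ν : ℕ → ℤ) : Prop :=
  ∃ σ lo, ValidSeq k ℓ (fun t => lam t - if t = z then 1 else 0) z d σ lo ∧
    memPt k ℓ ν ∧
    ν = fun t => (lam t - if t = z then 1 else 0) + σ t - epsI (z + 1) (z + d) t

/-- Membership in `Ω_{λ,z} = Ω_{λ,z,h′}`. -/
def OmegaZ (k ℓ : ℕ) (lam : ℕ → ℤ) (z : ℕ) (ν : ℕ → ℤ) : Prop :=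
  OmegaMem k ℓ lam z (hprime ℓ (fun t => lam t - if t = z then 1 else 0) z) ν

/-- Membership in `Ω_{λ,{z}ⁿ}` (iterated `Ω_{·,z}`). -/
def OmegaPow (k ℓ z : ℕ) : ℕ → (ℕ → ℤ) → (ℕ → ℤ) → Prop
  | 0, lam, ν => ν = lam
  | n + 1, lam, ν => ∃ ν', OmegaZ k ℓ lam z ν' ∧ OmegaPow k ℓ z n ν' ν

/-- `D_{Δ^k(λ)} = {down_{Δ^k(λ)}(z) : z ∈ [b_λ]}`. -/
def Dset (k ℓ : ℕ) (lam : ℕ → ℤ) : Finset ℕ :=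
  (Finset.Icc 1 (bottomB k ℓ lam)).image fun z => downF ℓ (DeltaK k ℓ lam) z

/-- `[ℓ]_λ = [ℓ] ∖ D_{Δ^k(λ)}`. -/
def ellSet (k ℓ : ℕ) (lam : ℕ → ℤ) : Finset ℕ := Finset.Icc 1 ℓ \ Dset k ℓ lam

/-- Partitions as weakly decreasing, eventually zero functions on `{1,2,…}`. -/
def IsPartF (κ : ℕ → ℕ) : Prop :=
  (∀ i, 1 ≤ i → κ (i + 1) ≤ κ i) ∧ ∃ n, ∀ i, n < i → κ i = 0

/-- Hook length of the cell `(i,j)` of the partition `κ`. -/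
def hookLen (κ : ℕ → ℕ) (i j : ℕ) : ℕ :=
  (κ i + 1 - j) + Set.ncard {r : ℕ | i < r ∧ j ≤ κ r}

/-- `κ` is a `c`-core. -/
def IsCore (c : ℕ) (κ : ℕ → ℕ) : Prop :=
  IsPartF κ ∧ ∀ i j, 1 ≤ i → 1 ≤ j → j ≤ κ i → hookLen κ i j ≠ c

/-- The bijection `𝔭` from `(k+1)`-cores to `k`-bounded partitions:
`𝔭(κ)_i` counts the cells of row `i` of `κ` with hook length at most `k`. -/
def pCore (k : ℕ) (κ : ℕ → ℕ) (i : ℕ) : ℕ :=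
  Set.ncard {j : ℕ | 1 ≤ j ∧ j ≤ κ i ∧ hookLen κ i j ≤ k}

/-- `κ` is the `(k+1)`-core `𝔠(μ)` of the `k`-bounded partition `μ` of length `≤ ℓ`. -/
def IsCoreOf (k ℓ : ℕ) (κ : ℕ → ℕ) (μ : ℕ → ℤ) : Prop :=
  IsCore (k + 1) κ ∧ ∀ i, 1 ≤ i → (pCore k κ i : ℤ) = if i ≤ ℓ then μ i else 0

/-- `𝔠(μ) ⊆ 𝔠(λ)`, i.e. `w_μ ≤ w_λ` in Bruhat order. -/
def coreLE (k ℓ : ℕ) (μ lam : ℕ → ℤ) : Prop :=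
  ∃ κ1 κ2, IsCoreOf k ℓ κ1 μ ∧ IsCoreOf k ℓ κ2 lam ∧ ∀ i, κ1 i ≤ κ2 i

/-- `𝔠(μ) ⊊ 𝔠(λ)`, i.e. `w_μ < w_λ` in Bruhat order. -/
def coreLT (k ℓ : ℕ) (μ lam : ℕ → ℤ) : Prop :=
  ∃ κ1 κ2, IsCoreOf k ℓ κ1 μ ∧ IsCoreOf k ℓ κ2 lam ∧ (∀ i, κ1 i ≤ κ2 i) ∧ κ1 ≠ κ2


lemma mem_DeltaPlus' (ℓ : ℕ) (a b : ℕ) :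
    (a, b) ∈ DeltaPlus ℓ ↔ 1 ≤ a ∧ b ≤ ℓ ∧ a < b := by
  simp only [DeltaPlus, Finset.mem_filter, Finset.mem_product, Finset.mem_Icc]
  omega

lemma mem_DeltaK' (k ℓ : ℕ) (μ : ℕ → ℤ) (a b : ℕ) :
    (a, b) ∈ DeltaK k ℓ μ ↔ 1 ≤ a ∧ b ≤ ℓ ∧ a < b ∧ (k : ℤ) - μ a + a < b := by
  simp only [DeltaK, DeltaPlus, Finset.mem_filter, Finset.mem_product, Finset.mem_Icc]
  omega

lemma mono_aux' (ℓ : ℕ) (μ : ℕ → ℤ)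
    (hmono : ∀ s ∈ Finset.Icc 1 (ℓ - 1), μ (s + 1) ≤ μ s + 1)
    {a : ℕ} (ha : 1 ≤ a) :
    ∀ b, a ≤ b → b ≤ ℓ → (a : ℤ) - μ a ≤ (b : ℤ) - μ b := by
  intro b
  induction b with
  | zero => intro h1 _; omega
  | succ n ih =>
    intro hab hb
    rcases Nat.lt_or_ge a (n + 1) with h | h
    · have h1 : μ (n + 1) ≤ μ n + 1 := hmono n (by rw [Finset.mem_Icc]; omega)
      have h2 := ih (by omega) (by omega)
      push_cast at h2 ⊢
      omega
    · have : a = n + 1 := by omega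
      subst this; omega

lemma deltaK_closure (k ℓ : ℕ) (μ : ℕ → ℤ)
    (hmono : ∀ s ∈ Finset.Icc 1 (ℓ - 1), μ (s + 1) ≤ μ s + 1) :
    ∀ p ∈ DeltaK k ℓ μ, ∀ q ∈ DeltaPlus ℓ, q.1 ≤ p.1 → p.2 ≤ q.2 → q ∈ DeltaK k ℓ μ := by
  rintro ⟨p1, p2⟩ hp ⟨q1, q2⟩ hq hq1 hq2
  have hq1' : q1 ≤ p1 := hq1
  have hq2' : p2 ≤ q2 := hq2
  rw [mem_DeltaK'] at hp ⊢
  rw [mem_DeltaPlus'] at hq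
  obtain ⟨hp1, hp2, hp3, hp4⟩ := hp
  obtain ⟨hqa, hqb, hqc⟩ := hq
  have hm := mono_aux' ℓ μ hmono hqa p1 hq1' (by omega)
  exact ⟨hqa, hqb, hqc, by omega⟩

/-- The key computation: if row `x` of `Δ^k(μ)` is nonempty (its minimal column
`j = k - μ_x + x + 1` is at most `ℓ`) and `μ_{x+1} ≤ μ_x`, then `(x,j)` is removable
and `down_{Δ^k(μ)}(x) = j`. -/
lemma down_eq' (k ℓ : ℕ) (μ : ℕ → ℤ)
    (hmono : ∀ s ∈ Finset.Icc 1 (ℓ - 1), μ (s + 1) ≤ μ s + 1)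
    (x j : ℕ) (hx : 1 ≤ x) (hj : (j : ℤ) = (k : ℤ) - μ x + x + 1)
    (hxj : x < j) (hjl : j ≤ ℓ) (hdec : μ (x + 1) ≤ μ x) :
    IsRemovableAt ℓ (DeltaK k ℓ μ) x j ∧ downF ℓ (DeltaK k ℓ μ) x = j := by
  classical
  have hmem : (x, j) ∈ DeltaK k ℓ μ := by
    rw [mem_DeltaK']; exact ⟨hx, hjl, hxj, by omega⟩
  have hrem : IsRemovableAt ℓ (DeltaK k ℓ μ) x j := by
    refine ⟨hmem, (Finset.erase_subset _ _).trans (Finset.filter_subset _ _), ?_⟩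
    rintro ⟨p1, p2⟩ hp q hq hq1 hq2
    rw [Finset.mem_erase] at hp
    obtain ⟨hpne, hpK⟩ := hp
    have hqK : q ∈ DeltaK k ℓ μ :=
      deltaK_closure k ℓ μ hmono _ hpK q hq hq1 hq2
    rw [Finset.mem_erase]
    refine ⟨fun hqe => ?_, hqK⟩
    subst hqe
    have hq1' : x ≤ p1 := hq1
    have hq2' : p2 ≤ j := hq2
    rw [mem_DeltaK'] at hpK
    obtain ⟨hp1, hp2, hp3, hp4⟩ := hpK
    rcases Nat.lt_or_ge x p1 with hcase | hcase
    · -- p1 ≥ x+1 : then the minimal column of row p1 exceeds j, contradiction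
      have hm := mono_aux' ℓ μ hmono (show 1 ≤ x + 1 by omega) p1 (by omega) (by omega)
      omega
    · -- p1 = x : then p2 = j, so p = (x,j), contradiction
      have hp1x : p1 = x := by omega
      subst hp1x
      have hp2j : p2 = j := by omega
      subst hp2j
      exact hpne rfl
  refine ⟨hrem, ?_⟩
  unfold downF
  apply le_antisymm
  · apply Finset.sup_le
    intro b hb
    rw [Finset.mem_filter, Finset.mem_Icc] at hb
    obtain ⟨hbIcc, hbrem⟩ := hb
    obtain ⟨hbK, _, hbcl⟩ := hbrem
    rw [mem_DeltaK'] at hbK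
    obtain ⟨_, hbl, hxb, hbint⟩ := hbK
    show b ≤ j
    by_contra hlt
    push_neg at hlt
    have hpmem : (x, b - 1) ∈ (DeltaK k ℓ μ).erase (x, b) := by
      rw [Finset.mem_erase, mem_DeltaK']
      constructor
      · intro hne
        have hsnd : b - 1 = b := congrArg Prod.snd hne
        omega
      · exact ⟨hx, by omega, by omega, by omega⟩
    have hcontra := hbcl (x, b - 1) hpmem (x, b)
      (by rw [mem_DeltaPlus']; exact ⟨hx, hbl, hxb⟩) (le_refl x) (Nat.sub_le b 1)
    exact Finset.notMem_erase _ _ hcontra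
  · have hjmem : j ∈ (Finset.Icc 1 ℓ).filter
        (fun j' => IsRemovableAt ℓ (DeltaK k ℓ μ) x j') := by
      rw [Finset.mem_filter, Finset.mem_Icc]
      exact ⟨⟨by omega, hjl⟩, hrem⟩
    exact Finset.le_sup (f := id) hjmem

/-- Lemma 3.12: under hypotheses (a), (b), (c), both `down_{Δ^k(λ)}(z)` and
`down_{Δ^k(μ)}(z+i)` are defined and `down_{Δ^k(λ)}(z) + i = down_{Δ^k(μ)}(z+i)`. -/
theorem stmt2 (k ℓ : ℕ) (hℓ : 1 ≤ ℓ) (lam mu : ℕ → ℤ)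
    (hlam : memPt k ℓ lam) (hmu : memPt k ℓ mu)
    (z : ℕ) (hz1 : 1 ≤ z) (hz2 : z + 1 ≤ bottomB k ℓ lam)
    (i : ℕ) (hi1 : 1 ≤ i) (hi2 : z + i + 1 ≤ ℓ) (hi3 : z + i ≤ bottomB k ℓ lam)
    (ha1 : ∀ t, z ≤ t → t < z + i → lam t = lam (t + 1))
    (ha2 : lam (z + i + 1) ≤ lam (z + i))
    (hb1 : mu (z + i - 1) + 1 = mu (z + i))
    (hb2 : mu (z + i + 1) ≤ mu (z + i))
    (hc : mu (z + i - 1) + 1 = lam (z + i - 1)) :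
    IsRemovableAt ℓ (DeltaK k ℓ lam) z (downF ℓ (DeltaK k ℓ lam) z) ∧
    IsRemovableAt ℓ (DeltaK k ℓ mu) (z + i) (downF ℓ (DeltaK k ℓ mu) (z + i)) ∧
    downF ℓ (DeltaK k ℓ lam) z + i = downF ℓ (DeltaK k ℓ mu) (z + i) := by
  classical
  -- the constant chain of λ
  have hchain : ∀ t, z ≤ t → t ≤ z + i → lam t = lam z := by
    intro t
    induction t with
    | zero => intro h1 _; omega
    | succ n ih =>
      intro h1 h2
      rcases Nat.lt_or_ge n z with h | h
      · have : n + 1 = z := by omega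
        rw [this]
      · have := ha1 n h (by omega)
        rw [← this, ih h (by omega)]
  have hmu_zi : mu (z + i) = lam z := by
    have h1 : lam (z + i - 1) = lam z := hchain (z + i - 1) (by omega) (by omega)
    omega
  have hlamz_le : lam z ≤ (k : ℤ) := hlam.1 z (Finset.mem_Icc.mpr ⟨hz1, by omega⟩)
  -- row z+i of Δ^k(λ) is nonempty, giving the bound  k - λ_z + z + 1 + i ≤ ℓ
  have hbound : (k : ℤ) - lam z + z + 1 + i ≤ ℓ := by
    obtain ⟨p, hp, hpa⟩ :=
      (Finset.le_sup_iff (show (⊥ : ℕ) < z + i by exact Nat.pos_of_ne_zero (by omega))).mp hi3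
    obtain ⟨p1, p2⟩ := p
    have hpa' : z + i ≤ p1 := hpa
    rw [mem_DeltaK'] at hp
    obtain ⟨hp1, hp2, hp3, hp4⟩ := hp
    have hm := mono_aux' ℓ lam hlam.2 (show 1 ≤ z + i by omega) p1 hpa' (by omega)
    have hli : lam (z + i) = lam z := hchain (z + i) (by omega) (by omega)
    rw [hli] at hm
    push_cast at hm ⊢
    omega
  -- the removable column for λ at row z
  set jl : ℕ := ((k : ℤ) - lam z + z).toNat + 1 with hjl_def
  have h0 : (0 : ℤ) ≤ (k : ℤ) - lam z + z := by omega
  have hjl : (jl : ℤ) = (k : ℤ) - lam z + z + 1 := by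
    rw [hjl_def]
    push_cast [Int.toNat_of_nonneg h0]
    ring
  have hdl := down_eq' k ℓ lam hlam.2 z jl hz1 hjl
    (by omega) (by omega)
    (le_of_eq (ha1 z le_rfl (by omega)).symm)
  -- the removable column for μ at row z+i
  have hdm := down_eq' k ℓ mu hmu.2 (z + i) (jl + i) (by omega)
    (by push_cast; rw [hmu_zi]; omega)
    (by omega) (by omega) hb2
  refine ⟨?_, ?_, ?_⟩
  · rw [hdl.2]; exact hdl.1
  · rw [hdm.2]; exact hdm.1
  · rw [hdl.2, hdm.2]

end KkSchur
end

section
/- Let λ ∈ Pℓk. Then g̃_λ^{(k)} = ∏_{m ∈ D_{Δ^k(λ)}} (1 − L_m) g_λ^{(k)}; explicitly, K(Δ^k(λ); L(Δ^k(λ)); λ) = Σ_{T ⊆ D_{Δ^k(λ)}} (−1)^{|T|} K(Δ^k(λ); L(Δ^{k+1}(λ)); λ − ε_T), where ε_T := Σ_{t∈T} ε_t. -/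
/-!
Common framework: root ideals, Katalan functions, (generalized) K-k-Schur functions,
lowering operators, bounce paths, the sets `Ω`, and (k+1)-cores.
Vectors `γ ∈ ℤ^ℓ` are modelled as functions `ℕ → ℤ`, with the relevant indices `1,…,ℓ`.
Symmetric-function identities are stated in `MvPolynomial (Fin N) ℚ` for every `N`.
-/

noncomputable section KkSchur

/-! ### Auxiliary lemmas for `stmt17` -/

namespace Stmt17Aux

open Finset

private lemma map_neg_sum {α M : Type*} [SubtractionCommMonoid M] (s : Multiset α) (g : α → M) :
    (s.map fun T => -g T).sum = -(s.map g).sum := by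
  rw [show (fun T => -g T) = (Neg.neg ∘ g) from rfl, ← Multiset.map_map, Multiset.sum_map_neg']

/-- Expansion of the Katalan function when an element is added to the multiset `M`. -/
lemma katalan_cons (N ℓ : ℕ) (Ψ : Finset (ℕ × ℕ)) (a : ℕ) (M : Multiset ℕ) (γ : ℕ → ℤ) :
    Katalan N ℓ Ψ (a ::ₘ M) γ =
      Katalan N ℓ Ψ M γ -
        Katalan N ℓ Ψ M (fun t => γ t - if t = a then 1 else 0) := by
  unfold Katalan
  rw [Multiset.powerset_cons, Multiset.map_add, Multiset.sum_add, Multiset.map_map]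
  rw [sub_eq_add_neg]
  congr 1
  have hL : ∀ T : Multiset ℕ,
      shiftL (a ::ₘ T) γ = shiftL T (fun t => γ t - if t = a then 1 else 0) := by
    intro T
    funext t
    simp only [shiftL, Multiset.count_cons]
    push_cast
    ring
  have : ∀ T : Multiset ℕ,
      (((-1 : ℚ) ^ Multiset.card (a ::ₘ T)) •
        ∑ A ∈ (DeltaPlus ℓ \ Ψ).powerset,
          ((-1 : ℚ) ^ A.card) • kgamma N ℓ (shiftR A (shiftL (a ::ₘ T) γ))) =
      -(((-1 : ℚ) ^ Multiset.card T) •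
        ∑ A ∈ (DeltaPlus ℓ \ Ψ).powerset,
          ((-1 : ℚ) ^ A.card) • kgamma N ℓ
            (shiftR A (shiftL T (fun t => γ t - if t = a then 1 else 0)))) := by
    intro T
    rw [hL T, Multiset.card_cons, pow_succ, mul_comm, mul_smul, neg_one_smul]
  calc (Multiset.map
        ((fun T => ((-1 : ℚ) ^ Multiset.card T) •
            ∑ A ∈ (DeltaPlus ℓ \ Ψ).powerset,
              ((-1 : ℚ) ^ A.card) • kgamma N ℓ (shiftR A (shiftL T γ))) ∘ (a ::ₘ ·))
        M.powerset).sum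
      = (Multiset.map (fun T => -(((-1 : ℚ) ^ Multiset.card T) •
            ∑ A ∈ (DeltaPlus ℓ \ Ψ).powerset,
              ((-1 : ℚ) ^ A.card) • kgamma N ℓ
                (shiftR A (shiftL T (fun t => γ t - if t = a then 1 else 0)))))
          M.powerset).sum := by
        refine congrArg Multiset.sum (Multiset.map_congr rfl ?_)
        intro T _
        exact this T
    _ = _ := map_neg_sum _ _

set_option maxHeartbeats 1000000 in
/-- Expansion of the Katalan function when a finset is added to the multiset `M`. -/
lemma katalan_finset_add (N ℓ : ℕ) (Ψ : Finset (ℕ × ℕ)) (M : Multiset ℕ) (D : Finset ℕ) :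
    ∀ γ : ℕ → ℤ,
    Katalan N ℓ Ψ (M + D.val) γ =
      ∑ T ∈ D.powerset, ((-1 : ℚ) ^ T.card) •
        Katalan N ℓ Ψ M (fun t => γ t - if t ∈ T then 1 else 0) := by
  classical
  induction D using Finset.induction_on with
  | empty =>
      intro γ
      simp only [Finset.empty_val, Multiset.empty_eq_zero, add_zero, powerset_empty,
        Finset.sum_singleton, Finset.card_empty, pow_zero, one_smul]
      congr 1
      funext t
      simp
  | @insert a D ha ih =>
      intro γ
      rw [Finset.insert_val_of_notMem ha, Multiset.add_cons, katalan_cons, ih, ih,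
        Finset.sum_powerset_insert ha, sub_eq_add_neg, ← Finset.sum_neg_distrib]
      refine congrArg₂ (· + ·) rfl ?_
      apply Finset.sum_congr rfl
      intro T hT
      have hat : a ∉ T := fun h => ha (Finset.mem_powerset.mp hT h)
      have harg : (fun t => (γ t - if t = a then 1 else 0) - if t ∈ T then 1 else 0)
          = fun t => γ t - if t ∈ insert a T then (1 : ℤ) else 0 := by
        funext t
        by_cases h2 : t = a
        · subst h2
          have h1 : t ∉ T := hat
          simp [h1]
        · by_cases h1 : t ∈ T <;> simp [Finset.mem_insert, h1, h2]
      rw [Finset.card_insert_of_notMem hat, pow_succ, mul_comm, mul_smul, neg_one_smul,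
        neg_inj]
      exact congrArg _ (congrArg (Katalan N ℓ Ψ M) harg)

end Stmt17Aux
namespace Stmt17Aux

open Finset

section Comb

variable (k ℓ : ℕ) (lam : ℕ → ℤ)

/-- The first column of row `i` of `Δ^k(λ)`. -/
def mc (i : ℕ) : ℕ := ((k : ℤ) - lam i + i + 1).toNat

variable {k ℓ lam}

lemma lam_anti (hlam : memPk k ℓ lam) {i j : ℕ} (hi : 1 ≤ i) (hij : i ≤ j) (hj : j ≤ ℓ) :
    lam j ≤ lam i := by
  induction j with
  | zero => omega
  | succ n ih =>
      rcases Nat.eq_or_lt_of_le hij with h | h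
      · rw [h]
      · have h1 : i ≤ n := by omega
        have h2 : lam (n + 1) ≤ lam n := hlam.2 n (by simp [Finset.mem_Icc]; omega)
        exact le_trans h2 (ih h1 (by omega))

lemma mem_DeltaK {K : ℕ} {p : ℕ × ℕ} :
    p ∈ DeltaK K ℓ lam ↔ 1 ≤ p.1 ∧ p.1 < p.2 ∧ p.2 ≤ ℓ ∧ (K : ℤ) - lam p.1 + p.1 < p.2 := by
  simp only [DeltaK, DeltaPlus, Finset.mem_filter, Finset.mem_product, Finset.mem_Icc]
  omega

lemma mc_cast (hlam : memPk k ℓ lam) {i : ℕ} (hi : 1 ≤ i) (hiℓ : i ≤ ℓ) :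
    (mc k lam i : ℤ) = (k : ℤ) - lam i + i + 1 ∧ i + 1 ≤ mc k lam i := by
  have h := (hlam.1 i (by simp [Finset.mem_Icc]; omega)).2
  simp only [mc]
  omega

lemma mem_row (hlam : memPk k ℓ lam) {z j : ℕ} (hz : 1 ≤ z) (hzℓ : z ≤ ℓ) :
    (z, j) ∈ DeltaK k ℓ lam ↔ mc k lam z ≤ j ∧ j ≤ ℓ := by
  obtain ⟨h1, h2⟩ := mc_cast hlam hz hzℓ
  rw [mem_DeltaK]
  simp only []
  omega

lemma mc_lt (hlam : memPk k ℓ lam) {i j : ℕ} (hi : 1 ≤ i) (hij : i < j) (hj : j ≤ ℓ) :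
    mc k lam i < mc k lam j := by
  have h1 := lam_anti hlam hi (le_of_lt hij) hj
  obtain ⟨h2, _⟩ := mc_cast hlam hi (by omega)
  obtain ⟨h3, _⟩ := mc_cast hlam (by omega : 1 ≤ j) hj
  omega

lemma mc_le (hlam : memPk k ℓ lam) {i j : ℕ} (hi : 1 ≤ i) (hij : i ≤ j) (hj : j ≤ ℓ) :
    mc k lam i ≤ mc k lam j := by
  rcases Nat.eq_or_lt_of_le hij with h | h
  · rw [h]
  · exact le_of_lt (mc_lt hlam hi h hj)

lemma mem_Icc_bottom (hlam : memPk k ℓ lam) {z : ℕ} (hz : 1 ≤ z)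
    (hzb : z ≤ bottomB k ℓ lam) : z < ℓ ∧ mc k lam z ≤ ℓ := by
  have hne : (DeltaK k ℓ lam).Nonempty := by
    by_contra h
    rw [Finset.not_nonempty_iff_eq_empty] at h
    rw [bottomB, h] at hzb
    simp at hzb
    omega
  obtain ⟨p, hp, hsup⟩ := Finset.exists_mem_eq_sup _ hne Prod.fst
  rw [mem_DeltaK] at hp
  have hb : bottomB k ℓ lam = p.1 := hsup
  have hp1ℓ : p.1 ≤ ℓ := by omega
  have hmcp : mc k lam p.1 ≤ p.2 := by
    obtain ⟨h1, _⟩ := mc_cast hlam hp.1 hp1ℓ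
    omega
  have hzp : z ≤ p.1 := by omega
  have : mc k lam z ≤ mc k lam p.1 := mc_le hlam hz hzp hp1ℓ
  omega

lemma le_bottom (hlam : memPk k ℓ lam) {z : ℕ} (hz : 1 ≤ z) (hzℓ : z ≤ ℓ)
    (hmc : mc k lam z ≤ ℓ) : z ≤ bottomB k ℓ lam := by
  have hmem : (z, mc k lam z) ∈ DeltaK k ℓ lam := (mem_row hlam hz hzℓ).mpr ⟨le_refl _, hmc⟩
  exact Finset.le_sup (f := Prod.fst) hmem

lemma removable_mc (hlam : memPk k ℓ lam) {z : ℕ} (hz : 1 ≤ z)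
    (hzb : z ≤ bottomB k ℓ lam) : IsRemovableAt ℓ (DeltaK k ℓ lam) z (mc k lam z) := by
  obtain ⟨hzℓ, hmcℓ⟩ := mem_Icc_bottom hlam hz hzb
  obtain ⟨hcast, hzmc⟩ := mc_cast hlam hz (le_of_lt hzℓ)
  refine ⟨(mem_row hlam hz (le_of_lt hzℓ)).mpr ⟨le_refl _, hmcℓ⟩, ?_, ?_⟩
  · intro p hp
    have := Finset.mem_of_mem_erase hp
    rw [mem_DeltaK] at this
    simp only [DeltaPlus, Finset.mem_filter, Finset.mem_product, Finset.mem_Icc]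
    omega
  · intro p hp q hq hq1 hq2
    rw [Finset.mem_erase] at hp ⊢
    obtain ⟨hpne, hpmem⟩ := hp
    rw [mem_DeltaK] at hpmem
    simp only [DeltaPlus, Finset.mem_filter, Finset.mem_product, Finset.mem_Icc] at hq
    have hq1ℓ : 1 ≤ q.1 := hq.1.1.1
    have hlamq : lam p.1 ≤ lam q.1 := lam_anti hlam hq1ℓ hq1 (by omega)
    have hqmem : q ∈ DeltaK k ℓ lam := by
      rw [mem_DeltaK]
      refine ⟨by omega, hq.2, by omega, by omega⟩
    refine ⟨?_, hqmem⟩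
    intro hqe
    have hq1z : q.1 = z := by rw [hqe]
    have hq2mc : q.2 = mc k lam z := by rw [hqe]
    have hmcp : mc k lam p.1 ≤ p.2 := by
      obtain ⟨h1, _⟩ := mc_cast hlam (by omega : 1 ≤ p.1) (by omega : p.1 ≤ ℓ)
      omega
    rcases Nat.eq_or_lt_of_le (show z ≤ p.1 by omega) with h | h
    · apply hpne
      have : mc k lam p.1 = mc k lam z := by rw [← h]
      have hp2 : p.2 = mc k lam z := by omega
      exact Prod.ext (by omega) (by omega)
    · have : mc k lam z < mc k lam p.1 := mc_lt hlam hz h (by omega)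
      omega

lemma downF_eq (hlam : memPk k ℓ lam) {z : ℕ} (hz : 1 ≤ z)
    (hzb : z ≤ bottomB k ℓ lam) : downF ℓ (DeltaK k ℓ lam) z = mc k lam z := by
  classical
  obtain ⟨hzℓ, hmcℓ⟩ := mem_Icc_bottom hlam hz hzb
  obtain ⟨hcast, hzmc⟩ := mc_cast hlam hz (le_of_lt hzℓ)
  unfold downF
  apply le_antisymm
  · apply Finset.sup_le
    intro j hj
    rw [Finset.mem_filter] at hj
    obtain ⟨hjIcc, hjrem⟩ := hj
    obtain ⟨hmem, _, hclosed⟩ := hjrem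
    simp only [mem_DeltaK] at hmem
    have hmcj : mc k lam z ≤ j := by omega
    simp only [id]
    by_contra hcon
    push_neg at hcon
    -- j > mc z : then (z, j-1) ∈ erase and closure forces (z,j) ∈ erase, contradiction
    have hj1 : (z, j - 1) ∈ (DeltaK k ℓ lam).erase (z, j) := by
      rw [Finset.mem_erase]
      constructor
      · intro he
        have := congrArg Prod.snd he
        simp at this
        omega
      · simp only [mem_DeltaK]
        refine ⟨by omega, by omega, by omega, by omega⟩
    have := hclosed _ hj1 (z, j) (by
      simp only [DeltaPlus, Finset.mem_filter, Finset.mem_product, Finset.mem_Icc]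
      omega) (le_refl z) (Nat.sub_le j 1)
    rw [Finset.mem_erase] at this
    exact this.1 rfl
  · have hmem : mc k lam z ∈ (Finset.Icc 1 ℓ).filter
        (fun j => IsRemovableAt ℓ (DeltaK k ℓ lam) z j) := by
      rw [Finset.mem_filter, Finset.mem_Icc]
      exact ⟨⟨by omega, hmcℓ⟩, removable_mc hlam hz hzb⟩
    exact Finset.le_sup (f := id) hmem

lemma Dset_eq (hlam : memPk k ℓ lam) :
    Dset k ℓ lam = (Finset.Icc 1 (bottomB k ℓ lam)).image (mc k lam) := by
  unfold Dset
  apply Finset.image_congr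
  intro z hz
  rw [Finset.mem_coe, Finset.mem_Icc] at hz
  exact downF_eq hlam hz.1 hz.2

lemma DeltaK_succ_subset : DeltaK (k + 1) ℓ lam ⊆ DeltaK k ℓ lam := by
  intro p hp
  rw [mem_DeltaK] at hp ⊢
  push_cast at hp ⊢
  omega

lemma sdiff_DeltaK (hlam : memPk k ℓ lam) :
    DeltaK k ℓ lam \ DeltaK (k + 1) ℓ lam =
      (Finset.Icc 1 (bottomB k ℓ lam)).image (fun z => (z, mc k lam z)) := by
  ext p
  rw [Finset.mem_sdiff, Finset.mem_image]
  constructor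
  · rintro ⟨h1, h2⟩
    rw [mem_DeltaK] at h1
    rw [mem_DeltaK] at h2
    push_cast at h2
    obtain ⟨hcast, _⟩ := mc_cast hlam h1.1 (by omega : p.1 ≤ ℓ)
    have hp2 : p.2 = mc k lam p.1 := by omega
    refine ⟨p.1, ?_, ?_⟩
    · rw [Finset.mem_Icc]
      exact ⟨h1.1, le_bottom hlam h1.1 (by omega) (by omega)⟩
    · exact Prod.ext rfl hp2.symm
  · rintro ⟨z, hzIcc, hzeq⟩
    rw [Finset.mem_Icc] at hzIcc
    obtain ⟨hzℓ, hmcℓ⟩ := mem_Icc_bottom hlam hzIcc.1 hzIcc.2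
    obtain ⟨hcast, hzmc⟩ := mc_cast hlam hzIcc.1 (by omega)
    subst hzeq
    constructor
    · simp only [mem_DeltaK]
      refine ⟨hzIcc.1, by omega, hmcℓ, by omega⟩
    · simp only [mem_DeltaK]
      push_cast
      omega

lemma Lmul_split (hlam : memPk k ℓ lam) :
    Lmul (DeltaK k ℓ lam) = Lmul (DeltaK (k + 1) ℓ lam) + (Dset k ℓ lam).val := by
  have hsub : DeltaK (k + 1) ℓ lam ⊆ DeltaK k ℓ lam := DeltaK_succ_subset
  have hval : (DeltaK k ℓ lam).val =
      (DeltaK (k + 1) ℓ lam).val + (DeltaK k ℓ lam \ DeltaK (k + 1) ℓ lam).val := by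
    rw [Finset.sdiff_val, add_tsub_cancel_of_le (Finset.val_le_iff.mpr hsub)]
  unfold Lmul
  rw [hval, Multiset.map_add]
  congr 1
  rw [sdiff_DeltaK hlam, Dset_eq hlam]
  have hinj1 : Set.InjOn (fun z => (z, mc k lam z)) (Finset.Icc 1 (bottomB k ℓ lam)) := by
    intro x _ y _ h
    exact congrArg Prod.fst h
  have hinj2 : Set.InjOn (mc k lam) (Finset.Icc 1 (bottomB k ℓ lam)) := by
    intro x hx y hy h
    rw [Finset.coe_Icc, Set.mem_Icc] at hx hy
    by_contra hne
    rcases Nat.lt_or_ge x y with hlt | hge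
    · have := mc_lt hlam hx.1 hlt (le_of_lt (mem_Icc_bottom hlam hy.1 hy.2).1)
      omega
    · have hlt : y < x := by omega
      have := mc_lt hlam hy.1 hlt (le_of_lt (mem_Icc_bottom hlam hx.1 hx.2).1)
      omega
  rw [Finset.image_val_of_injOn hinj1, Finset.image_val_of_injOn hinj2, Multiset.map_map]
  rfl

end Comb

end Stmt17Aux


/-- Equation (101): `g̃_λ^{(k)} = ∏_{m ∈ D_{Δ^k(λ)}} (1 - L_m) g_λ^{(k)}`, explicitly
`K(Δ^k(λ); Δ^k(λ); λ) = Σ_{T ⊆ D_{Δ^k(λ)}} (-1)^{|T|} K(Δ^k(λ); Δ^{k+1}(λ); λ - ε_T)`. -/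
theorem stmt17 (k ℓ : ℕ) (hℓ : 1 ≤ ℓ) (lam : ℕ → ℤ) (hlam : memPk k ℓ lam) (N : ℕ) :
    Katalan N ℓ (DeltaK k ℓ lam) (Lmul (DeltaK k ℓ lam)) lam =
      ∑ Tt ∈ (Dset k ℓ lam).powerset,
        ((-1 : ℚ) ^ Tt.card) •
          Katalan N ℓ (DeltaK k ℓ lam) (Lmul (DeltaK (k + 1) ℓ lam))
            (fun t => lam t - if t ∈ Tt then 1 else 0) := by
  rw [Stmt17Aux.Lmul_split hlam, Stmt17Aux.katalan_finset_add]

end KkSchur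
end

section
/- Let λ ∈ Pℓk, z ∈ [ℓ] and i ∈ [0, ℓ−z]. If λ − ε_{[z, z+i]} ∈ Pℓk, then w_{λ − ε_{[z,z+i]}} < w_λ; equivalently, the (k+1)-core 𝔠(λ − ε_{[z,z+i]}) is strictly contained in the (k+1)-core 𝔠(λ). -/
/-!
Common framework: root ideals, Katalan functions, (generalized) K-k-Schur functions,
lowering operators, bounce paths, the sets `Ω`, and (k+1)-cores.
Vectors `γ ∈ ℤ^ℓ` are modelled as functions `ℕ → ℤ`, with the relevant indices `1,…,ℓ`.
Symmetric-function identities are stated in `MvPolynomial (Fin N) ℚ` for every `N`.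
-/

noncomputable section KkSchur

/-! ### Auxiliary: explicit construction of the `(k+1)`-core of a `k`-bounded partition -/

namespace CoreAux

open scoped Classical

/-- Step-by-step construction of the offsets of the `k`-skew diagram of `m`.
`offStep k ℓ m (d+1)` computes the offset of row `ℓ - d`, given the offsets of
all lower rows (computed by `offStep k ℓ m d`). -/
noncomputable def offStep (k ℓ : ℕ) (m : ℕ → ℕ) : ℕ → ℕ → ℕ
  | 0, _ => 0
  | d+1, t =>
    if t = ℓ - d then
      if hP : ∃ o, offStep k ℓ m d (t+1) ≤ o ∧
          offStep k ℓ m d (t+1) + m (t+1) ≤ o + m t ∧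
          ((Finset.Ioc t ℓ).filter fun j => o + 1 ≤ offStep k ℓ m d j + m j).card + m t ≤ k
      then Nat.find hP else 0
    else offStep k ℓ m d t

/-- The offset of row `t` of the `k`-skew diagram. -/
noncomputable def Off (k ℓ : ℕ) (m : ℕ → ℕ) (t : ℕ) : ℕ := offStep k ℓ m ℓ t

/-- The constructed `(k+1)`-core: row `t` has length offset + `m t`. -/
noncomputable def Kk (k ℓ : ℕ) (m : ℕ → ℕ) (t : ℕ) : ℕ := Off k ℓ m t + m t

/-- Number of rows strictly below row `i` reaching column `o + 1`. -/
noncomputable def legc (k ℓ : ℕ) (m : ℕ → ℕ) (i o : ℕ) : ℕ :=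
  ((Finset.Ioc i ℓ).filter fun j => o + 1 ≤ Kk k ℓ m j).card

/-- The conditions defining the offset of row `i`. -/
def Pc (k ℓ : ℕ) (m : ℕ → ℕ) (i o : ℕ) : Prop :=
  Off k ℓ m (i+1) ≤ o ∧ Kk k ℓ m (i+1) ≤ o + m i ∧ legc k ℓ m i o + m i ≤ k

/-- Hypotheses on the `k`-bounded partition data `m`. -/
structure Hyp (k ℓ : ℕ) (m : ℕ → ℕ) : Prop where
  dec : ∀ i, 1 ≤ i → m (i+1) ≤ m i
  bd : ∀ i, m i ≤ k
  z : ∀ i, ℓ < i → m i = 0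

variable {k ℓ : ℕ} {m m' : ℕ → ℕ}

lemma offStep_stab (k ℓ : ℕ) (m : ℕ → ℕ) :
    ∀ e d, d ≤ e → ∀ t, ℓ - d < t → offStep k ℓ m e t = offStep k ℓ m d t := by
  intro e
  induction e with
  | zero => intro d hd t _; rw [Nat.le_zero.mp hd]
  | succ e ih =>
    intro d hd t ht
    rcases Nat.lt_or_ge d (e+1) with h | h
    · have hde : d ≤ e := by omega
      have h1 : ℓ - e ≤ ℓ - d := Nat.sub_le_sub_left hde ℓ
      show offStep k ℓ m (e+1) t = offStep k ℓ m d t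
      rw [offStep, if_neg (by omega)]
      exact ih d hde t ht
    · have : d = e + 1 := by omega
      rw [this]

lemma off_gt (k ℓ : ℕ) (m : ℕ → ℕ) (t : ℕ) (ht : ℓ < t) : Off k ℓ m t = 0 := by
  unfold Off
  rw [offStep_stab k ℓ m ℓ 0 (Nat.zero_le _) t (by omega)]
  rfl

lemma K_gt (H : Hyp k ℓ m) (t : ℕ) (ht : ℓ < t) : Kk k ℓ m t = 0 := by
  unfold Kk; rw [off_gt k ℓ m t ht, H.z t ht]

lemma off_zero (k ℓ : ℕ) (m : ℕ → ℕ) : Off k ℓ m 0 = 0 := by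
  unfold Off
  suffices h : ∀ d, d ≤ ℓ → offStep k ℓ m d 0 = 0 from h ℓ le_rfl
  intro d
  induction d with
  | zero => intro _; rfl
  | succ d ih =>
    intro hd
    rw [offStep, if_neg (by omega)]
    exact ih (by omega)

lemma off_spec (H : Hyp k ℓ m) (i : ℕ) (h1 : 1 ≤ i) (h2 : i ≤ ℓ) :
    Pc k ℓ m i (Off k ℓ m i) ∧ ∀ o, Pc k ℓ m i o → Off k ℓ m i ≤ o := by
  set d := ℓ - i with hd
  have hid : ℓ - d = i := by omega
  have hd1 : d + 1 ≤ ℓ := by omega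
  have hOff : Off k ℓ m i = offStep k ℓ m (d+1) i := by
    unfold Off
    exact offStep_stab k ℓ m ℓ (d+1) hd1 i (by omega)
  have hPeq : ∀ o, (offStep k ℓ m d (i+1) ≤ o ∧
      offStep k ℓ m d (i+1) + m (i+1) ≤ o + m i ∧
      ((Finset.Ioc i ℓ).filter fun j => o + 1 ≤ offStep k ℓ m d j + m j).card + m i ≤ k)
      ↔ Pc k ℓ m i o := by
    intro o
    have e1 : offStep k ℓ m d (i+1) = Off k ℓ m (i+1) :=
      (offStep_stab k ℓ m ℓ d (by omega) (i+1) (by omega)).symm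
    have e2 : ((Finset.Ioc i ℓ).filter fun j => o + 1 ≤ offStep k ℓ m d j + m j)
        = ((Finset.Ioc i ℓ).filter fun j => o + 1 ≤ Off k ℓ m j + m j) := by
      apply Finset.filter_congr
      intro j hj
      rw [Finset.mem_Ioc] at hj
      have e3 : offStep k ℓ m d j = Off k ℓ m j :=
        (offStep_stab k ℓ m ℓ d (by omega) j (by omega)).symm
      rw [e3]
    unfold Pc legc Kk
    rw [e1, e2]
  have hex : ∃ o, Pc k ℓ m i o := by
    refine ⟨Kk k ℓ m (i+1) + (Finset.Ioc i ℓ).sup (Kk k ℓ m), ?_, ?_, ?_⟩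
    · exact le_trans (Nat.le_add_right _ _) (Nat.le_add_right _ _)
    · exact le_trans (Nat.le_add_right _ _) (Nat.le_add_right _ _)
    · have : ((Finset.Ioc i ℓ).filter fun j =>
          Kk k ℓ m (i+1) + (Finset.Ioc i ℓ).sup (Kk k ℓ m) + 1 ≤ Kk k ℓ m j) = ∅ := by
        apply Finset.filter_false_of_mem
        intro j hj
        have := Finset.le_sup (f := Kk k ℓ m) hj
        omega
      unfold legc
      rw [this]
      simpa using H.bd i
  have hex' : ∃ o, offStep k ℓ m d (i+1) ≤ o ∧
      offStep k ℓ m d (i+1) + m (i+1) ≤ o + m i ∧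
      ((Finset.Ioc i ℓ).filter fun j => o + 1 ≤ offStep k ℓ m d j + m j).card + m i ≤ k := by
    obtain ⟨o, ho⟩ := hex
    exact ⟨o, (hPeq o).2 ho⟩
  have hstep : offStep k ℓ m (d+1) i = Nat.find hex' := by
    rw [offStep, if_pos hid.symm, dif_pos hex']
  rw [hOff, hstep]
  exact ⟨(hPeq _).1 (Nat.find_spec hex'), fun o ho => Nat.find_min' hex' ((hPeq o).2 ho)⟩

lemma off_le (H : Hyp k ℓ m) (i : ℕ) (h1 : 1 ≤ i) (h2 : i ≤ ℓ) :
    Off k ℓ m (i+1) ≤ Off k ℓ m i := (off_spec H i h1 h2).1.1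

lemma K_le (H : Hyp k ℓ m) (i : ℕ) (h1 : 1 ≤ i) : Kk k ℓ m (i+1) ≤ Kk k ℓ m i := by
  rcases le_or_gt i ℓ with h2 | h2
  · have h3 := (off_spec H i h1 h2).1.2.1
    have e : Kk k ℓ m i = Off k ℓ m i + m i := rfl
    omega
  · rw [K_gt H (i+1) (by omega)]
    exact Nat.zero_le _

lemma legc_mono (i : ℕ) {o o' : ℕ} (h : o ≤ o') : legc k ℓ m i o' ≤ legc k ℓ m i o := by
  apply Finset.card_le_card
  intro j hj
  rw [Finset.mem_filter] at hj ⊢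
  exact ⟨hj.1, by omega⟩

lemma hook_formula (H : Hyp k ℓ m) (i j : ℕ) (hj : 1 ≤ j) :
    hookLen (Kk k ℓ m) i j = (Kk k ℓ m i + 1 - j) + legc k ℓ m i (j - 1) := by
  unfold hookLen legc
  congr 1
  have hset : {r : ℕ | i < r ∧ j ≤ Kk k ℓ m r}
      = ↑((Finset.Ioc i ℓ).filter fun r => (j - 1) + 1 ≤ Kk k ℓ m r) := by
    ext r
    simp only [Set.mem_setOf_eq, Finset.coe_filter, Finset.mem_Ioc]
    constructor
    · rintro ⟨h1, h2⟩
      have hr : r ≤ ℓ := by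
        by_contra hr
        have := K_gt H r (by omega)
        omega
      exact ⟨⟨h1, hr⟩, by omega⟩
    · rintro ⟨⟨h1, _⟩, h2⟩
      exact ⟨h1, by omega⟩
  rw [hset, Set.ncard_coe_finset]

lemma hook_anti (H : Hyp k ℓ m) (i : ℕ) {j j' : ℕ} (hj : 1 ≤ j) (hjj : j ≤ j') :
    hookLen (Kk k ℓ m) i j' ≤ hookLen (Kk k ℓ m) i j := by
  rw [hook_formula H i j hj, hook_formula H i j' (by omega)]
  have h1 : legc k ℓ m i (j' - 1) ≤ legc k ℓ m i (j - 1) := legc_mono i (by omega)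
  have h2 : Kk k ℓ m i + 1 - j' ≤ Kk k ℓ m i + 1 - j := by omega
  omega

lemma hook_small (H : Hyp k ℓ m) (i j : ℕ) (h1 : 1 ≤ i) (h2 : i ≤ ℓ)
    (hj1 : Off k ℓ m i + 1 ≤ j) :
    hookLen (Kk k ℓ m) i j ≤ k := by
  have hK : Kk k ℓ m i = Off k ℓ m i + m i := rfl
  have spec := (off_spec H i h1 h2).1.2.2
  rw [hook_formula H i j (by omega)]
  have hleg : legc k ℓ m i (j - 1) ≤ legc k ℓ m i (Off k ℓ m i) := legc_mono i (by omega)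
  omega

lemma hook_big (H : Hyp k ℓ m) :
    ∀ i, 1 ≤ i → i ≤ ℓ → ∀ j, 1 ≤ j → j ≤ Off k ℓ m i →
      k + 2 ≤ hookLen (Kk k ℓ m) i j := by
  suffices hmain : ∀ n i, ℓ - i < n → 1 ≤ i → i ≤ ℓ → ∀ j, 1 ≤ j → j ≤ Off k ℓ m i →
      k + 2 ≤ hookLen (Kk k ℓ m) i j by
    intro i h1 h2
    exact hmain (ℓ - i + 1) i (by omega) h1 h2
  intro n
  induction n with
  | zero => intro i h; omega
  | succ n IH =>
    intro i hn h1 h2 j hj1 hj2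
    have hOi : 1 ≤ Off k ℓ m i := by omega
    have key : k + 2 ≤ hookLen (Kk k ℓ m) i (Off k ℓ m i) := by
      have spec := off_spec H i h1 h2
      have hnot : ¬ Pc k ℓ m i (Off k ℓ m i - 1) := by
        intro h
        have := spec.2 _ h
        omega
      unfold Pc at hnot
      push_neg at hnot
      have hK : Kk k ℓ m i = Off k ℓ m i + m i := rfl
      have hK1 : Kk k ℓ m (i+1) = Off k ℓ m (i+1) + m (i+1) := rfl
      -- Either the offsets of rows i and i+1 agree, or the leg count at `Off i - 1` is large.
      by_cases hcase : legc k ℓ m i (Off k ℓ m i - 1) + m i ≤ k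
      · -- then condition 1 or 2 fails, forcing Off(i+1) = Off i
        have heq : Off k ℓ m (i+1) = Off k ℓ m i := by
          by_contra hne
          have hlt : Off k ℓ m (i+1) ≤ Off k ℓ m i - 1 := by
            have := spec.1.1; omega
          rcases le_or_gt (Kk k ℓ m (i+1)) (Off k ℓ m i - 1 + m i) with hc | hc
          · exact absurd (hnot hlt hc) (by omega)
          · have hle := spec.1.2.1
            have hdec := H.dec i h1
            omega
        -- Off i = Off (i+1) ≥ 1, so i < ℓ
        have hiℓ : i < ℓ := by
          by_contra hiℓ
          have h0 : Off k ℓ m (i+1) = 0 := off_gt k ℓ m (i+1) (by omega)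
          omega
        set j0 := Off k ℓ m i with hj0
        have hKj0 : j0 ≤ Kk k ℓ m (i+1) := by
          rw [hK1, ← heq]; exact Nat.le_add_right _ _
        -- legc i (j0 - 1) = legc (i+1) (j0 - 1) + 1
        have hIoc : Finset.Ioc i ℓ = insert (i+1) (Finset.Ioc (i+1) ℓ) := by
          ext r
          simp only [Finset.mem_Ioc, Finset.mem_insert]
          omega
        have hlegeq : legc k ℓ m i (j0 - 1) = legc k ℓ m (i+1) (j0 - 1) + 1 := by
          unfold legc
          rw [hIoc, Finset.filter_insert, if_pos (by omega)]
          rw [Finset.card_insert_of_notMem (by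
            intro hmem
            have := Finset.mem_of_mem_filter _ hmem
            rw [Finset.mem_Ioc] at this
            omega)]
        have hIH : k + 2 ≤ hookLen (Kk k ℓ m) (i+1) j0 := by
          apply IH (i+1) (by omega) (by omega) (by omega) j0 (by omega) (by omega)
        have hKle := K_le H i h1
        rw [hook_formula H i j0 (by omega)]
        rw [hook_formula H (i+1) j0 (by omega)] at hIH
        omega
      · -- large leg count case
        rw [hook_formula H i (Off k ℓ m i) (by omega)]
        have : legc k ℓ m i (Off k ℓ m i - 1) ≥ k + 1 - m i := by omega
        omega
    calc k + 2 ≤ hookLen (Kk k ℓ m) i (Off k ℓ m i) := key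
      _ ≤ hookLen (Kk k ℓ m) i j := hook_anti H i hj1 hj2

lemma isPartF (H : Hyp k ℓ m) : IsPartF (Kk k ℓ m) :=
  ⟨fun i hi => K_le H i hi, ⟨ℓ, fun i hi => K_gt H i hi⟩⟩

lemma isCore (H : Hyp k ℓ m) : IsCore (k+1) (Kk k ℓ m) := by
  refine ⟨isPartF H, ?_⟩
  intro i j hi hj hjK
  have h2 : i ≤ ℓ := by
    by_contra h
    have := K_gt H i (by omega)
    omega
  rcases le_or_gt j (Off k ℓ m i) with h | h
  · have := hook_big H i hi h2 j hj h
    omega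
  · have := hook_small H i j hi h2 (by omega)
    omega

lemma pCore_eq (H : Hyp k ℓ m) (i : ℕ) (h1 : 1 ≤ i) : pCore k (Kk k ℓ m) i = m i := by
  rcases le_or_gt i ℓ with h2 | h2
  · unfold pCore
    have hset : {j : ℕ | 1 ≤ j ∧ j ≤ Kk k ℓ m i ∧ hookLen (Kk k ℓ m) i j ≤ k}
        = ↑(Finset.Icc (Off k ℓ m i + 1) (Kk k ℓ m i)) := by
      ext j
      simp only [Set.mem_setOf_eq, Finset.coe_Icc, Set.mem_Icc]
      constructor
      · rintro ⟨hj1, hj2, hj3⟩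
        refine ⟨?_, hj2⟩
        by_contra h
        push_neg at h
        have := hook_big H i h1 h2 j hj1 (by omega)
        omega
      · rintro ⟨hj1, hj2⟩
        exact ⟨by omega, hj2, hook_small H i j h1 h2 hj1⟩
    rw [hset, Set.ncard_coe_finset, Nat.card_Icc]
    have hK : Kk k ℓ m i = Off k ℓ m i + m i := rfl
    omega
  · have hK0 : Kk k ℓ m i = 0 := K_gt H i h2
    unfold pCore
    have hset : {j : ℕ | 1 ≤ j ∧ j ≤ Kk k ℓ m i ∧ hookLen (Kk k ℓ m) i j ≤ k} = ∅ := by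
      ext j
      simp only [Set.mem_setOf_eq, Set.mem_empty_iff_false, iff_false]
      rintro ⟨hj1, hj2, _⟩
      omega
    rw [hset, Set.ncard_empty, H.z i h2]

/-- Monotonicity of the core construction for `m' = m + ε_{[z,b]}`. -/
lemma mono (H : Hyp k ℓ m) (H' : Hyp k ℓ m') (z b : ℕ) (hz : 1 ≤ z) (hzb : z ≤ b)
    (hb : b ≤ ℓ) (hm : ∀ t, m t + (if z ≤ t ∧ t ≤ b then 1 else 0) = m' t) :
    ∀ i, 1 ≤ i → Off k ℓ m i ≤ Off k ℓ m' i ∧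
      Kk k ℓ m i + (if z ≤ i ∧ i ≤ b then 1 else 0) ≤ Kk k ℓ m' i := by
  suffices hmain : ∀ n i, ℓ - i < n → 1 ≤ i → Off k ℓ m i ≤ Off k ℓ m' i ∧
      Kk k ℓ m i + (if z ≤ i ∧ i ≤ b then 1 else 0) ≤ Kk k ℓ m' i by
    intro i h1
    exact hmain (ℓ - i + 1) i (by omega) h1
  intro n
  induction n with
  | zero => intro i h; omega
  | succ n IH =>
    intro i hn h1
    by_cases h2 : i ≤ ℓ
    · have Hnext : ∀ t, i < t → Off k ℓ m t ≤ Off k ℓ m' t ∧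
          Kk k ℓ m t + (if z ≤ t ∧ t ≤ b then 1 else 0) ≤ Kk k ℓ m' t := by
        intro t ht
        by_cases htℓ : t ≤ ℓ
        · exact IH t (by omega) (by omega)
        · refine ⟨?_, ?_⟩
          · rw [off_gt k ℓ m t (by omega)]; exact Nat.zero_le _
          · rw [K_gt H t (by omega), K_gt H' t (by omega), if_neg (by omega)]
      have spec := off_spec H i h1 h2
      have spec' := off_spec H' i h1 h2
      set o' := Off k ℓ m' i with ho'
      have hKnext : Kk k ℓ m (i+1) ≤ Kk k ℓ m' (i+1) := by
        have := (Hnext (i+1) (by omega)).2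
        omega
      have hK'le : Kk k ℓ m' (i+1) ≤ o' + m' i := spec'.1.2.1
      have hPc : Pc k ℓ m i o' := by
        refine ⟨le_trans (Hnext (i+1) (by omega)).1 spec'.1.1, ?_, ?_⟩
        · -- Kk m (i+1) ≤ o' + m i
          by_cases hreg : z ≤ i ∧ i ≤ b
          · have hmi := hm i
            rw [if_pos hreg] at hmi
            by_cases hib : i = b
            · -- strict decrease of Kk m' from b to b+1
              have hstrict : Kk k ℓ m' (i+1) < Kk k ℓ m' i := by
                by_cases hiℓ : i = ℓ
                · have hK0 : Kk k ℓ m' (i+1) = 0 := K_gt H' (i+1) (by omega)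
                  have e2 : Kk k ℓ m' i = Off k ℓ m' i + m' i := rfl
                  omega
                · have hOle := off_le H' i h1 h2
                  have hm1 := hm (i+1)
                  rw [if_neg (by omega)] at hm1
                  have hdec := H.dec i h1
                  have e1 : Kk k ℓ m' (i+1) = Off k ℓ m' (i+1) + m' (i+1) := rfl
                  have e2 : Kk k ℓ m' i = Off k ℓ m' i + m' i := rfl
                  omega
              have e2 : Kk k ℓ m' i = Off k ℓ m' i + m' i := rfl
              omega
            · -- i < b: strict from IH at i+1
              have := (Hnext (i+1) (by omega)).2
              rw [if_pos (by omega)] at this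
              have e2 : Kk k ℓ m' i = Off k ℓ m' i + m' i := rfl
              omega
          · have hmi := hm i
            rw [if_neg hreg] at hmi
            have e2 : Kk k ℓ m' i = Off k ℓ m' i + m' i := rfl
            omega
        · -- leg count
          have hlegle : legc k ℓ m i o' ≤ legc k ℓ m' i o' := by
            apply Finset.card_le_card
            intro j hj
            rw [Finset.mem_filter] at hj ⊢
            have hjm := hj.1
            rw [Finset.mem_Ioc] at hjm
            have := (Hnext j (by omega)).2
            refine ⟨hj.1, by omega⟩
          have hleg' := spec'.1.2.2
          have hmi := hm i
          by_cases hreg : z ≤ i ∧ i ≤ b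
          · rw [if_pos hreg] at hmi; omega
          · rw [if_neg hreg] at hmi; omega
      have hOle : Off k ℓ m i ≤ o' := spec.2 o' hPc
      refine ⟨hOle, ?_⟩
      have hmi := hm i
      have e1 : Kk k ℓ m i = Off k ℓ m i + m i := rfl
      have e2 : Kk k ℓ m' i = Off k ℓ m' i + m' i := rfl
      by_cases hreg : z ≤ i ∧ i ≤ b
      · rw [if_pos hreg] at hmi ⊢; omega
      · rw [if_neg hreg] at hmi ⊢; omega
    · refine ⟨?_, ?_⟩
      · rw [off_gt k ℓ m i (by omega)]; exact Nat.zero_le _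
      · rw [K_gt H i (by omega), K_gt H' i (by omega), if_neg (by omega)]

/-- The clamp of an integer vector to a `ℕ`-valued partition supported on `[1,ℓ]`. -/
def mclamp (ℓ : ℕ) (lam : ℕ → ℤ) : ℕ → ℕ :=
  fun t => if 1 ≤ t ∧ t ≤ ℓ then (lam t).toNat else 0

lemma hyp_of_memPk {k ℓ : ℕ} {lam : ℕ → ℤ} (h : memPk k ℓ lam) : Hyp k ℓ (mclamp ℓ lam) := by
  constructor
  · intro i hi
    unfold mclamp
    by_cases h2 : i + 1 ≤ ℓ
    · rw [if_pos (by omega), if_pos (by omega)]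
      have := h.2 i (by rw [Finset.mem_Icc]; omega)
      omega
    · rw [if_neg (by omega)]
      exact Nat.zero_le _
  · intro i
    unfold mclamp
    by_cases h2 : 1 ≤ i ∧ i ≤ ℓ
    · rw [if_pos h2]
      have := (h.1 i (by rw [Finset.mem_Icc]; omega)).2
      omega
    · rw [if_neg h2]; exact Nat.zero_le _
  · intro i hi
    unfold mclamp
    rw [if_neg (by omega)]

lemma isCoreOf_clamp {k ℓ : ℕ} {lam : ℕ → ℤ} (h : memPk k ℓ lam) :
    IsCoreOf k ℓ (Kk k ℓ (mclamp ℓ lam)) lam := by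
  have H := hyp_of_memPk h
  refine ⟨isCore H, ?_⟩
  intro i hi
  rw [pCore_eq H i hi]
  unfold mclamp
  by_cases h2 : i ≤ ℓ
  · rw [if_pos ⟨hi, h2⟩, if_pos h2]
    have := (h.1 i (by rw [Finset.mem_Icc]; omega)).1
    omega
  · rw [if_neg (by omega), if_neg h2]
    rfl

end CoreAux

/-- Lemma 4.3: if `λ - ε_{[z,z+i]} ∈ Pℓk` then `w_{λ - ε_{[z,z+i]}} < w_λ`,
i.e. `𝔠(λ - ε_{[z,z+i]}) ⊊ 𝔠(λ)`. -/
theorem stmt19 (k ℓ : ℕ) (hℓ : 1 ≤ ℓ) (lam : ℕ → ℤ) (hlam : memPk k ℓ lam)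
    (z i : ℕ) (hz1 : 1 ≤ z) (hz2 : z ≤ ℓ) (hi : z + i ≤ ℓ)
    (hsub : memPk k ℓ (fun t => lam t - epsI z (z + i) t)) :
    coreLT k ℓ (fun t => lam t - epsI z (z + i) t) lam := by
  classical
  set μ : ℕ → ℤ := fun t => lam t - epsI z (z + i) t with hμ
  set m : ℕ → ℕ := CoreAux.mclamp ℓ μ with hmdef
  set m' : ℕ → ℕ := CoreAux.mclamp ℓ lam with hm'def
  have H : CoreAux.Hyp k ℓ m := CoreAux.hyp_of_memPk hsub
  have H' : CoreAux.Hyp k ℓ m' := CoreAux.hyp_of_memPk hlam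
  set b := z + i with hb
  have hm : ∀ t, m t + (if z ≤ t ∧ t ≤ b then 1 else 0) = m' t := by
    intro t
    by_cases ht : 1 ≤ t ∧ t ≤ ℓ
    · have h0 : 0 ≤ μ t := (hsub.1 t (by rw [Finset.mem_Icc]; omega)).1
      have hμt : μ t = lam t - epsI z b t := rfl
      simp only [hmdef, hm'def, CoreAux.mclamp, if_pos ht]
      unfold epsI at hμt
      by_cases hr : z ≤ t ∧ t ≤ b
      · rw [if_pos hr] at hμt
        rw [if_pos hr]
        omega
      · rw [if_neg hr] at hμt
        rw [if_neg hr]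
        omega
    · simp only [hmdef, hm'def, CoreAux.mclamp, if_neg ht]
      rw [if_neg (by omega)]
  have hmono := CoreAux.mono H H' z b hz1 (by omega) hi hm
  refine ⟨CoreAux.Kk k ℓ m, CoreAux.Kk k ℓ m', CoreAux.isCoreOf_clamp hsub,
    CoreAux.isCoreOf_clamp hlam, ?_, ?_⟩
  · intro t
    rcases Nat.eq_zero_or_pos t with h0 | h0
    · subst h0
      have e1 : CoreAux.Kk k ℓ m 0 = CoreAux.Off k ℓ m 0 + m 0 := rfl
      have e2 : m 0 = 0 := by simp [hmdef, CoreAux.mclamp]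
      rw [e1, e2, CoreAux.off_zero]
      exact Nat.zero_le _
    · have := (hmono t h0).2
      omega
  · intro hcontra
    have hbb := (hmono b (by omega)).2
    rw [if_pos (by omega)] at hbb
    have := congrFun hcontra b
    omega

end KkSchur
end
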